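/- Let (Γ, L) be a strongly connected periodic graph, x₀ ∈ V_Γ a vertex, and y ∈ V_Γ a vertex in the same L-orbit as x₀ (so that y − x₀ ∈ L is well-defined). Then d_{P_Γ}(y − x₀) ≤ d_Γ(x₀, y), where d_Γ is the weighted graph distance and d_{P_Γ} is the gauge function of the growth polytope P_Γ. -/

import Mathlib

open Pointwise

/-- An `n`-dimensional periodic graph, presented concretely: since the action of `L ≅ ℤⁿ` on the
vertex/edge sets is free with finite quotient, vertices are `(Fin n → ℤ) × V0` and edges are
translates of finitely many edge classes `E0`; the class `e` joins `(0, srcV e)` to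
`(vec e, tgtV e)` and has weight `wt e > 0`. -/
structure PeriodicGraph (n : ℕ) where
  V0 : Type
  E0 : Type
  fintypeV0 : Fintype V0
  fintypeE0 : Fintype E0
  srcV : E0 → V0
  tgtV : E0 → V0
  vec : E0 → Fin n → ℤ
  wt : E0 → ℕ
  wt_pos : ∀ e, 0 < wt e

namespace PeriodicGraph

variable {n : ℕ}

/-- `Reaches G x y w`: there is a directed walk in `Γ` from `x` to `y` of total weight `w`. -/
inductive Reaches (G : PeriodicGraph n) :
    ((Fin n → ℤ) × G.V0) → ((Fin n → ℤ) × G.V0) → ℕ → Prop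
  | refl (x : (Fin n → ℤ) × G.V0) : Reaches G x x 0
  | tail {x : (Fin n → ℤ) × G.V0} {w : ℕ} (u : Fin n → ℤ) (e : G.E0) :
      Reaches G x (u, G.srcV e) w → Reaches G x (u + G.vec e, G.tgtV e) (w + G.wt e)

/-- `Γ` is strongly connected: any vertex reaches any other by a directed walk. -/
def StronglyConnected (G : PeriodicGraph n) : Prop :=
  ∀ x y : (Fin n → ℤ) × G.V0, ∃ w : ℕ, G.Reaches x y w

/-- The weighted graph distance `d_Γ(x,y)` (the minimal weight of a walk from `x` to `y`). -/
noncomputable def dist (G : PeriodicGraph n) (x y : (Fin n → ℤ) × G.V0) : ℕ :=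
  sInf {w : ℕ | G.Reaches x y w}

/-- A cycle in the quotient graph `Γ/L`: a nonempty chained list of edge classes, closed, whose
visited vertices are pairwise distinct. -/
def IsQCycle (G : PeriodicGraph n) (l : List G.E0) : Prop :=
  ∃ h : l ≠ [], l.Chain' (fun e f => G.tgtV e = G.srcV f) ∧
    G.tgtV (l.getLast h) = G.srcV (l.head h) ∧ (l.map G.tgtV).Nodup

/-- The net translation vector `μ(⟨q⟩)` of a quotient walk. -/
def qvec (G : PeriodicGraph n) (l : List G.E0) : Fin n → ℤ := (l.map G.vec).sum

/-- The total weight `w(q)` of a quotient walk. -/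
def qwt (G : PeriodicGraph n) (l : List G.E0) : ℕ := (l.map G.wt).sum

/-- The normalization `ν(q) = μ(⟨q⟩)/w(q)` of a quotient cycle. -/
noncomputable def nu (G : PeriodicGraph n) (l : List G.E0) : Fin n → ℝ :=
  (G.qwt l : ℝ)⁻¹ • fun i => (G.qvec l i : ℝ)

/-- The growth polytope `P_Γ`: the convex hull of `0` together with the normalized translation
vectors of all cycles of `Γ/L`. -/
noncomputable def growthPolytope (G : PeriodicGraph n) : Set (Fin n → ℝ) :=
  convexHull ℝ (insert 0 {x : Fin n → ℝ | ∃ l : List G.E0, G.IsQCycle l ∧ x = G.nu l})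

/-- The gauge `d_P(y) = inf {t ≥ 0 | y ∈ t·P}` of a set `P`. -/
noncomputable def pgauge {n : ℕ} (P : Set (Fin n → ℝ)) (y : Fin n → ℝ) : ℝ :=
  sInf {t : ℝ | 0 ≤ t ∧ y ∈ t • P}

/-- A periodic realization `Φ : V_Γ → L ⊗ ℝ`, i.e. `Φ(u + x) = u + Φ(x)` for `u ∈ L`. -/
def IsRealization (G : PeriodicGraph n) (Φ : (Fin n → ℤ) × G.V0 → Fin n → ℝ) : Prop :=
  ∀ (u : Fin n → ℤ) (x : (Fin n → ℤ) × G.V0),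
    Φ (u + x.1, x.2) = (fun i => (u i : ℝ)) + Φ x

/-- `x₀` is `P`-initial: every nonzero vertex (extreme point) `u` of `P_Γ` is the normalized
vector of some cycle of `Γ/L` whose support contains the image of `x₀`. -/
def PInitial (G : PeriodicGraph n) (x₀ : (Fin n → ℤ) × G.V0) : Prop :=
  ∀ u ∈ Set.extremePoints ℝ G.growthPolytope, u ≠ 0 →
    ∃ l : List G.E0, G.IsQCycle l ∧ G.nu l = u ∧ x₀.2 ∈ l.map G.tgtV

end PeriodicGraph


namespace PeriodicGraph

variable {n : ℕ}

private lemma getElem_eq_of_eq {α : Type*} {l : List α} {a b : ℕ} (h : a = b)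
    (ha : a < l.length) : l[a] = l[b]'(h ▸ ha) := by subst h; rfl

lemma qvec_append (G : PeriodicGraph n) (l₁ l₂ : List G.E0) :
    G.qvec (l₁ ++ l₂) = G.qvec l₁ + G.qvec l₂ := by
  simp [qvec]

lemma qwt_append (G : PeriodicGraph n) (l₁ l₂ : List G.E0) :
    G.qwt (l₁ ++ l₂) = G.qwt l₁ + G.qwt l₂ := by
  simp [qwt]

lemma qwt_pos (G : PeriodicGraph n) {l : List G.E0} (h : l ≠ []) : 0 < G.qwt l := by
  cases l with
  | nil => simp at h
  | cons e t =>
    have := G.wt_pos e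
    simp only [qwt, List.map_cons, List.sum_cons]
    omega

/-- Decomposition of a closed chained walk in the quotient graph into simple cycles. -/
lemma decomp (G : PeriodicGraph n) : ∀ (N : ℕ) (l : List G.E0), l.length ≤ N →
    l.Chain' (fun e f => G.tgtV e = G.srcV f) → ∀ h : l ≠ [],
    G.tgtV (l.getLast h) = G.srcV (l.head h) →
    ∃ cs : List (List G.E0), (∀ c ∈ cs, G.IsQCycle c) ∧
      (cs.map G.qvec).sum = G.qvec l ∧ (cs.map G.qwt).sum = G.qwt l := by
  intro N
  induction N with
  | zero =>
    intro l hl _ h _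
    exact absurd (List.length_eq_zero_iff.mp (Nat.le_zero.mp hl)) h
  | succ N ih =>
    intro l hlen hchain hne hclosed
    by_cases hnd : (l.map G.tgtV).Nodup
    · exact ⟨[l], by
        intro c hc
        simp only [List.mem_singleton] at hc
        subst hc
        exact ⟨hne, hchain, hclosed, hnd⟩, by simp, by simp⟩
    · have hninj : ¬ Function.Injective (l.map G.tgtV).get :=
        fun hinj => hnd (List.nodup_iff_injective_get.mpr hinj)
      rw [Function.not_injective_iff] at hninj
      obtain ⟨a, b, hab, hne'⟩ := hninj
      have key : ∃ i j : ℕ, ∃ hij : i < j, ∃ hj : j < l.length,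
          G.tgtV (l[i]'(hij.trans hj)) = G.tgtV (l[j]'hj) := by
        have ha2 : (a : ℕ) < l.length := by simpa using a.2
        have hb2 : (b : ℕ) < l.length := by simpa using b.2
        simp only [List.get_eq_getElem, List.getElem_map] at hab
        rcases lt_or_gt_of_ne (Fin.val_ne_of_ne hne') with h' | h'
        · exact ⟨a.1, b.1, h', hb2, by convert hab using 3 <;> simp⟩
        · exact ⟨b.1, a.1, h', ha2, by convert hab.symm using 3 <;> simp⟩
      obtain ⟨i, j, hij, hj, hdup⟩ := key
      have hchainget := List.isChain_iff_getElem.mp hchain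
      have hlt : (l.take (i+1)).length = i + 1 := by
        rw [List.length_take]; omega
      have hlm : ((l.drop (i+1)).take (j - i)).length = j - i := by
        rw [List.length_take, List.length_drop]; omega
      have hlr : (l.drop (j+1)).length = l.length - (j + 1) := by
        rw [List.length_drop]
      have hsplit : l = (l.take (i+1)) ++ (((l.drop (i+1)).take (j - i)) ++ (l.drop (j+1))) := by
        conv_lhs => rw [← List.take_append_drop (i+1) l]
        congr 1
        conv_lhs => rw [← List.take_append_drop (j - i) (l.drop (i+1))]
        congr 1
        rw [List.drop_drop]
        congr 1
        omega
      have hmget : ∀ k (hk : k < j - i), ((l.drop (i+1)).take (j - i))[k]'(by omega) = l[i+1+k]'(by omega) := by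
        intro k hk
        rw [List.getElem_take, List.getElem_drop]
      have hmne : ((l.drop (i+1)).take (j - i)) ≠ [] := List.length_pos_iff.mp (by omega)
      have hmhead : ((l.drop (i+1)).take (j - i)).head hmne = l[i+1]'(by omega) := by
        rw [List.head_eq_getElem_zero]
        have := hmget 0 (by omega)
        simpa using this
      have hmlast : ((l.drop (i+1)).take (j - i)).getLast hmne = l[j]'hj := by
        rw [List.getLast_eq_getElem]
        have h1 := hmget (((l.drop (i+1)).take (j - i)).length - 1) (by omega)
        rw [h1]
        exact PeriodicGraph.getElem_eq_of_eq (by omega) _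
      have hmchain : ((l.drop (i+1)).take (j - i)).Chain' (fun e f => G.tgtV e = G.srcV f) :=
        hchain.infix ((List.take_prefix _ _).isInfix.trans (List.drop_suffix _ _).isInfix)
      have hmclosed : G.tgtV (((l.drop (i+1)).take (j - i)).getLast hmne) = G.srcV (((l.drop (i+1)).take (j - i)).head hmne) := by
        rw [hmhead, hmlast, ← hdup]
        exact hchainget i (by omega)
      have htne : (l.take (i+1)) ≠ [] := List.length_pos_iff.mp (by omega)
      have hthead : (l.take (i+1)).head htne = l.head hne := by
        rw [List.head_eq_getElem_zero, List.head_eq_getElem_zero]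
        rw [List.getElem_take]
      have htlast : (l.take (i+1)).getLast htne = l[i]'(by omega) := by
        rw [List.getLast_eq_getElem]
        rw [List.getElem_take]
        exact PeriodicGraph.getElem_eq_of_eq (by omega) _
      have htchain : (l.take (i+1)).Chain' (fun e f => G.tgtV e = G.srcV f) := hchain.take _
      have hrchain : (l.drop (j+1)).Chain' (fun e f => G.tgtV e = G.srcV f) := hchain.drop _
      have hrhead : ∀ hrne : (l.drop (j+1)) ≠ [], (l.drop (j+1)).head hrne = l[j+1]'(by
          have := List.length_pos_iff.mpr hrne
          omega) := by
        intro hrne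
        rw [List.head_eq_getElem_zero]
        rw [List.getElem_drop]
      have hrestchain : ((l.take (i+1)) ++ (l.drop (j+1))).Chain' (fun e f => G.tgtV e = G.srcV f) := by
        apply htchain.append hrchain
        intro x hx z hz
        have hrne : (l.drop (j+1)) ≠ [] := by
          intro h0; rw [h0] at hz; simp at hz
        rw [List.getLast?_eq_getLast_of_ne_nil htne] at hx
        rw [List.head?_eq_head hrne] at hz
        simp only [Option.mem_def, Option.some.injEq] at hx hz
        subst hx; subst hz
        rw [htlast, hrhead hrne, hdup]
        have hjlen : j + 1 < l.length := by
          have := List.length_pos_iff.mpr hrne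
          omega
        exact hchainget j (by omega)
      have hrestne : (l.take (i+1)) ++ (l.drop (j+1)) ≠ [] := by
        simp [htne]
      have hresthead : ((l.take (i+1)) ++ (l.drop (j+1))).head hrestne = l.head hne := by
        rw [List.head_append_of_ne_nil htne, hthead]
      have hrestclosed : G.tgtV (((l.take (i+1)) ++ (l.drop (j+1))).getLast hrestne) =
          G.srcV (((l.take (i+1)) ++ (l.drop (j+1))).head hrestne) := by
        rw [hresthead]
        by_cases hre : (l.drop (j+1)) = []
        · have h1 : ((l.take (i+1)) ++ (l.drop (j+1))).getLast hrestne = (l.take (i+1)).getLast htne := by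
            congr 1
            rw [hre, List.append_nil]
          rw [h1, htlast, hdup]
          have hj' : j = l.length - 1 := by
            have : (l.drop (j+1)).length = 0 := by rw [hre]; rfl
            omega
          have h2 : l[j]'hj = l.getLast hne := by
            rw [List.getLast_eq_getElem]
            exact PeriodicGraph.getElem_eq_of_eq hj' _
          rw [h2]
          exact hclosed
        · rw [List.getLast_append_of_right_ne_nil _ _ hre]
          have hrlenpos : 0 < (l.drop (j+1)).length := List.length_pos_iff.mpr hre
          have h1 : (l.drop (j+1)).getLast hre = l.getLast hne := by
            rw [List.getLast_eq_getElem, List.getLast_eq_getElem]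
            rw [List.getElem_drop]
            exact PeriodicGraph.getElem_eq_of_eq (by omega) _
          rw [h1]
          exact hclosed
      obtain ⟨cs₁, hc₁, hv₁, hw₁⟩ := ih ((l.drop (i+1)).take (j - i)) (by omega) hmchain hmne hmclosed
      obtain ⟨cs₂, hc₂, hv₂, hw₂⟩ := ih ((l.take (i+1)) ++ (l.drop (j+1))) (by
          rw [List.length_append]; omega) hrestchain hrestne hrestclosed
      refine ⟨cs₁ ++ cs₂, ?_, ?_, ?_⟩
      · intro c hc
        rcases List.mem_append.mp hc with h' | h'
        · exact hc₁ c h'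
        · exact hc₂ c h'
      · rw [List.map_append, List.sum_append, hv₁, hv₂]
        conv_rhs => rw [hsplit]
        rw [G.qvec_append, G.qvec_append, G.qvec_append]
        abel
      · rw [List.map_append, List.sum_append, hw₁, hw₂]
        conv_rhs => rw [hsplit]
        rw [G.qwt_append, G.qwt_append, G.qwt_append]
        omega

/-- Extract the projected edge list of a walk. -/
lemma reaches_list (G : PeriodicGraph n) {x y : (Fin n → ℤ) × G.V0} {w : ℕ}
    (hr : G.Reaches x y w) :
    ∃ l : List G.E0, l.Chain' (fun e f => G.tgtV e = G.srcV f) ∧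
      G.qvec l = y.1 - x.1 ∧ G.qwt l = w ∧
      ((l = [] ∧ y = x) ∨ ∃ h : l ≠ [],
        G.srcV (l.head h) = x.2 ∧ G.tgtV (l.getLast h) = y.2) := by
  induction hr with
  | refl => exact ⟨[], List.isChain_nil, by simp [qvec], by simp [qwt], Or.inl ⟨rfl, rfl⟩⟩
  | tail u e hr ih =>
    obtain ⟨l, hchain, hvec, hwt, hend⟩ := ih
    refine ⟨l ++ [e], ?_, ?_, ?_, Or.inr ⟨by simp, ?_, ?_⟩⟩
    · apply hchain.append (List.isChain_singleton e)
      intro a ha b hb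
      simp only [List.head?_cons, Option.mem_def, Option.some.injEq] at hb
      subst hb
      rcases hend with ⟨rfl, _⟩ | ⟨hne, _, htgt⟩
      · simp at ha
      · rw [List.getLast?_eq_getLast_of_ne_nil hne] at ha
        simp only [Option.mem_def, Option.some.injEq] at ha
        subst ha
        exact htgt
    · rw [G.qvec_append, hvec]
      funext i
      simp [qvec]
      ring
    · rw [G.qwt_append, hwt]
      simp [qwt]
    · rcases hend with ⟨rfl, hyx⟩ | ⟨hne, hsrc, _⟩
      · have : (([] : List G.E0) ++ [e]).head (by simp) = e := rfl
        rw [this, ← hyx]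
      · rw [List.head_append_of_ne_nil hne]
        exact hsrc
    · rw [List.getLast_append]
      simp

lemma zero_mem_growthPolytope (G : PeriodicGraph n) : (0 : Fin n → ℝ) ∈ G.growthPolytope :=
  subset_convexHull ℝ _ (Set.mem_insert _ _)

/-- A normalized sum over a nonempty family of cycles lies in the dilated polytope. -/
lemma combo (G : PeriodicGraph n) : ∀ cs : List (List G.E0), cs ≠ [] →
    (∀ c ∈ cs, G.IsQCycle c) →
    (fun i => (((cs.map G.qvec).sum) i : ℝ)) ∈
      (((cs.map G.qwt).sum : ℕ) : ℝ) • G.growthPolytope := by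
  intro cs
  induction cs with
  | nil => intro h; exact absurd rfl h
  | cons c cs' ih =>
    intro _ hcyc
    have hc : G.IsQCycle c := hcyc c (List.mem_cons_self)
    obtain ⟨hcne, -, -, -⟩ := hc
    have ha : 0 < G.qwt c := G.qwt_pos hcne
    have hnuc : G.nu c ∈ G.growthPolytope :=
      subset_convexHull ℝ _ (Set.mem_insert_of_mem _ ⟨c, hcyc c (List.mem_cons_self), rfl⟩)
    by_cases hcs' : cs' = []
    · subst hcs'
      simp only [List.map_cons, List.map_nil, List.sum_cons, List.sum_nil, add_zero]
      rw [Set.mem_smul_set_iff_inv_smul_mem₀ (by positivity : ((G.qwt c : ℕ) : ℝ) ≠ 0)]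
      have : (((G.qwt c : ℕ) : ℝ))⁻¹ • (fun i => ((G.qvec c) i : ℝ)) = G.nu c := rfl
      rw [this]
      exact hnuc
    · have hW' : 0 < (cs'.map G.qwt).sum := by
        cases cs' with
        | nil => exact absurd rfl hcs'
        | cons d t =>
          have hd : G.IsQCycle d := hcyc d (by simp)
          obtain ⟨hdne, -, -, -⟩ := hd
          have := G.qwt_pos hdne
          simp only [List.map_cons, List.sum_cons]
          omega
      have hp' := ih hcs' (fun d hd => hcyc d (List.mem_cons_of_mem _ hd))
      set W' : ℕ := (cs'.map G.qwt).sum with hW'def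
      set a : ℕ := G.qwt c with hadef
      set vc : Fin n → ℝ := fun i => ((G.qvec c) i : ℝ) with hvc
      set vs : Fin n → ℝ := fun i => (((cs'.map G.qvec).sum) i : ℝ) with hvs
      have hp'' : ((W' : ℝ))⁻¹ • vs ∈ G.growthPolytope := by
        rw [← Set.mem_smul_set_iff_inv_smul_mem₀ (by positivity : ((W' : ℕ) : ℝ) ≠ 0)]
        exact hp'
      have hW : (0 : ℝ) < ((a + W' : ℕ) : ℝ) := by positivity
      simp only [List.map_cons, List.sum_cons]
      rw [Set.mem_smul_set_iff_inv_smul_mem₀ (ne_of_gt hW)]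
      have hvsum : (fun i => (((G.qvec c + (cs'.map G.qvec).sum)) i : ℝ)) = vc + vs := by
        funext i
        simp [hvc, hvs]
      rw [hvsum]
      have hkey : (((a + W' : ℕ) : ℝ))⁻¹ • (vc + vs) =
          ((a : ℝ) / ((a + W' : ℕ) : ℝ)) • G.nu c +
          ((W' : ℝ) / ((a + W' : ℕ) : ℝ)) • (((W' : ℝ))⁻¹ • vs) := by
        have hnu : G.nu c = ((a : ℝ))⁻¹ • vc := rfl
        rw [hnu, smul_smul, smul_smul, smul_add]
        congr 1
        · congr 1
          field_simp
        · congr 1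
          field_simp
      rw [hkey]
      exact (convex_convexHull ℝ _) hnuc hp''
        (by positivity) (by positivity)
        (by
          push_cast
          field_simp)

end PeriodicGraph

/-- A function `ℕ → ℕ` is of quasi-polynomial type if it eventually agrees with a
quasi-polynomial. -/
def IsQuasiPolynomialType (f : ℕ → ℕ) : Prop :=
  ∃ Np : ℕ, 0 < Np ∧ ∃ Q : ℕ → Polynomial ℚ, ∃ M : ℕ,
    ∀ i : ℕ, M ≤ i → (f i : ℚ) = (Q (i % Np)).eval (i : ℚ)

/-- For a strongly connected periodic graph, a vertex `x₀` and a vertex `y` in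
the same `L`-orbit, the gauge of `y − x₀` with respect to the growth polytope is at most the
weighted graph distance: `d_{P_Γ}(y − x₀) ≤ d_Γ(x₀, y)`. -/
theorem pgauge_le_dist {n : ℕ} (G : PeriodicGraph n) (hsc : G.StronglyConnected)
    (x₀ y : (Fin n → ℤ) × G.V0) (hxy : y.2 = x₀.2) :
    PeriodicGraph.pgauge G.growthPolytope (fun i => ((y.1 i - x₀.1 i : ℤ) : ℝ)) ≤
      (G.dist x₀ y : ℝ) := by
  classical
  obtain ⟨w0, hw0⟩ := hsc x₀ y
  have hsetne : {w : ℕ | G.Reaches x₀ y w}.Nonempty := ⟨w0, hw0⟩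
  have hmem : G.Reaches x₀ y (G.dist x₀ y) := Nat.sInf_mem hsetne
  obtain ⟨l, hchain, hvec, hwt, hend⟩ := G.reaches_list hmem
  have hbdd : BddBelow {t : ℝ | 0 ≤ t ∧
      (fun i => ((y.1 i - x₀.1 i : ℤ) : ℝ)) ∈ t • G.growthPolytope} :=
    ⟨0, fun t ht => ht.1⟩
  rcases hend with ⟨rfl, hyx⟩ | ⟨hne, hsrc, htgt⟩
  · have hd0 : G.dist x₀ y = 0 := by
      rw [← hwt]; simp [PeriodicGraph.qwt]
    have hv0 : (fun i => ((y.1 i - x₀.1 i : ℤ) : ℝ)) = 0 := by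
      funext i
      have := congrFun hvec i
      simp only [PeriodicGraph.qvec, List.map_nil, List.sum_nil, Pi.zero_apply,
        Pi.sub_apply] at this
      have h' : y.1 i - x₀.1 i = 0 := this.symm
      simp [h']
    rw [hd0, Nat.cast_zero]
    unfold PeriodicGraph.pgauge
    apply csInf_le hbdd
    refine ⟨le_refl 0, ?_⟩
    rw [hv0, Set.zero_smul_set ⟨0, G.zero_mem_growthPolytope⟩]
    exact Set.mem_singleton _
  · have hclosed : G.tgtV (l.getLast hne) = G.srcV (l.head hne) := by
      rw [htgt, hxy, ← hsrc]
    obtain ⟨cs, hcyc, hv, hw⟩ := G.decomp l.length l le_rfl hchain hne hclosed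
    have hcsne : cs ≠ [] := by
      intro h0
      rw [h0] at hw
      simp only [List.map_nil, List.sum_nil] at hw
      have := G.qwt_pos hne
      omega
    have hcombo := G.combo cs hcsne hcyc
    rw [hv, hw] at hcombo
    have hveq : (fun i => (((G.qvec l)) i : ℝ)) =
        (fun i => ((y.1 i - x₀.1 i : ℤ) : ℝ)) := by
      funext i
      rw [hvec]
      simp [Pi.sub_apply]
    rw [hvec] at hcombo
    have hveq2 : (fun i => (((y.1 - x₀.1)) i : ℝ)) =
        (fun i => ((y.1 i - x₀.1 i : ℤ) : ℝ)) := by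
      funext i
      simp [Pi.sub_apply]
    rw [hveq2, hwt] at hcombo
    unfold PeriodicGraph.pgauge
    apply csInf_le hbdd
    exact ⟨Nat.cast_nonneg _, hcombo⟩
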